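/- Let b ∈ ℕA and let m ≥ 1 be an integer. Then −b ∼ −m·b; explicitly, for every group homomorphism φ : ℤ^d → ℤ with φ(aᵢ) ≥ 0 for all i and every l ∈ ℤ^d such that k·l ∈ G_φ for some integer k ≥ 1, one has −b − l ∈ ℕA + G_φ if and only if −m·b − l ∈ ℕA + G_φ. -/

import Mathlib

/-!
Combinatorial setting: `a₁,…,a_n ∈ ℤ^d` generate `ℤ^d` as a group, `ℕA` is the submonoid
they generate. For a group homomorphism `φ : ℤ^d → ℤ` with `φ(aᵢ) ≥ 0` (encoding a face),
`M_φ = {x ∈ ℕA : φ x = 0}` and `G_φ` is the subgroup generated by `M_φ`. The relation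
`a ∼ b` says: for every such `φ` and every `l ∈ ℤ^d` with `k·l ∈ G_φ` for some `k ≥ 1`,
`a − l ∈ ℕA + G_φ ⟺ b − l ∈ ℕA + G_φ` (i.e. `E_τ(a) = E_τ(b)` for all faces `τ`).
-/

open Pointwise

/-- The submonoid `ℕA` of `ℤ^d` generated by `a₁,…,a_n`. -/
def NA {d n : ℕ} (a : Fin n → Fin d → ℤ) : AddSubmonoid (Fin d → ℤ) :=
  AddSubmonoid.closure (Set.range a)

/-- The subgroup `G_φ = ℤ(A ∩ τ)` generated by the face `M_φ = {x ∈ ℕA : φ x = 0}`. -/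
def Gface {d n : ℕ} (a : Fin n → Fin d → ℤ) (φ : (Fin d → ℤ) →+ ℤ) :
    AddSubgroup (Fin d → ℤ) :=
  AddSubgroup.closure {x | x ∈ NA a ∧ φ x = 0}

/-- The set `ℕA + G_φ ⊆ ℤ^d`. -/
def faceSum {d n : ℕ} (a : Fin n → Fin d → ℤ) (φ : (Fin d → ℤ) →+ ℤ) :
    Set (Fin d → ℤ) :=
  (NA a : Set (Fin d → ℤ)) + (Gface a φ : Set (Fin d → ℤ))

/-- The relation `x ∼ y`: `E_τ(x) = E_τ(y)` for all faces `τ`. -/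
def sim {d n : ℕ} (a : Fin n → Fin d → ℤ) (x y : Fin d → ℤ) : Prop :=
  ∀ φ : (Fin d → ℤ) →+ ℤ, (∀ i, 0 ≤ φ (a i)) →
    ∀ l : Fin d → ℤ, (∃ k : ℕ, 1 ≤ k ∧ (k : ℤ) • l ∈ Gface a φ) →
      (x - l ∈ faceSum a φ ↔ y - l ∈ faceSum a φ)

/-- For `b ∈ ℕA` and `m ≥ 1`, one has `−b ∼ −m·b`: for every group
homomorphism `φ : ℤ^d → ℤ` with `φ(aᵢ) ≥ 0` for all `i` and every `l ∈ ℤ^d` with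
`k·l ∈ G_φ` for some `k ≥ 1`, `−b − l ∈ ℕA + G_φ ⟺ −m·b − l ∈ ℕA + G_φ`. -/

lemma phi_nonneg' {d n : ℕ} (a : Fin n → Fin d → ℤ) (φ : (Fin d → ℤ) →+ ℤ)
    (hφ : ∀ i, 0 ≤ φ (a i)) {x : Fin d → ℤ} (hx : x ∈ NA a) : 0 ≤ φ x := by
  induction hx using AddSubmonoid.closure_induction with
  | mem x hx => obtain ⟨i, rfl⟩ := hx; exact hφ i
  | zero => simp
  | add x y _ _ hx hy => rw [map_add]; exact add_nonneg hx hy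

lemma phi_zero_on_Gface {d n : ℕ} (a : Fin n → Fin d → ℤ) (φ : (Fin d → ℤ) →+ ℤ)
    {g : Fin d → ℤ} (hg : g ∈ Gface a φ) : φ g = 0 := by
  have : Gface a φ ≤ φ.ker := (AddSubgroup.closure_le _).mpr (fun x hx => hx.2)
  exact this hg

lemma shift_faceSum {d n : ℕ} (a : Fin n → Fin d → ℤ) (φ : (Fin d → ℤ) →+ ℤ)
    {x g : Fin d → ℤ} (hx : x ∈ faceSum a φ) (hg : g ∈ Gface a φ) :
    x + g ∈ faceSum a φ := by
  obtain ⟨s, hs, t, ht, rfl⟩ := hx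
  exact ⟨s, hs, t + g, add_mem ht hg, (add_assoc s t g).symm⟩

theorem neg_sim_neg_smul {d n : ℕ} (hd : 0 < d) (hn : 0 < n)
    (a : Fin n → Fin d → ℤ) (hgen : AddSubgroup.closure (Set.range a) = ⊤)
    (b : Fin d → ℤ) (hb : b ∈ NA a) (m : ℕ) (hm : 1 ≤ m) :
    sim a (-b) (-(m • b)) := by
  intro φ hφ l hl
  obtain ⟨k, hk, hkl⟩ := hl
  have hbnn : 0 ≤ φ b := phi_nonneg' a φ hφ hb
  have hl0 : φ l = 0 := by
    have h := phi_zero_on_Gface a φ hkl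
    rw [map_zsmul, smul_eq_mul] at h
    have : (k : ℤ) ≠ 0 := Int.natCast_ne_zero.mpr (by omega)
    exact (mul_eq_zero.mp h).resolve_left this
  have key : ∀ x ∈ faceSum a φ, 0 ≤ φ x := by
    rintro x ⟨s, hs, t, ht, rfl⟩
    rw [map_add, phi_zero_on_Gface a φ ht, add_zero]
    exact phi_nonneg' a φ hφ hs
  have hmb : -(m • b) = -b + (-(((m : ℤ) - 1) • b)) := by
    have : (m • b : Fin d → ℤ) = (m : ℤ) • b := (natCast_zsmul b m).symm
    rw [this]
    rw [sub_smul, one_smul]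
    abel
  constructor
  · intro h
    have h1 := key _ h
    rw [map_sub, map_neg, hl0, sub_zero] at h1
    have hb0 : φ b = 0 := le_antisymm (by linarith) hbnn
    have hbG : b ∈ Gface a φ := AddSubgroup.subset_closure ⟨hb, hb0⟩
    have heq : -(m • b) - l = (-b - l) + (-(((m : ℤ) - 1) • b)) := by
      rw [hmb]; abel
    rw [heq]
    exact shift_faceSum a φ h (neg_mem (AddSubgroup.zsmul_mem _ hbG _))
  · intro h
    have h1 := key _ h
    rw [map_sub, map_neg, hl0, sub_zero, map_nsmul, nsmul_eq_mul] at h1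
    have hb0 : φ b = 0 := by
      have : (1 : ℤ) ≤ (m : ℤ) := by exact_mod_cast hm
      nlinarith
    have hbG : b ∈ Gface a φ := AddSubgroup.subset_closure ⟨hb, hb0⟩
    have heq : -b - l = (-(m • b) - l) + (((m : ℤ) - 1) • b) := by
      rw [hmb]; abel
    rw [heq]
    exact shift_faceSum a φ h (AddSubgroup.zsmul_mem _ hbG _)
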